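/- Let a, b, T, h₀ be real numbers with a > b ≥ 0 (hence a > 0), T > 0 and h₀ ∈ [0,1]. Let p : [0,T] → [0,1] be monotone nondecreasing, and let m : [0,T] → ℝ be continuous with m(T) ≥ −1 and satisfying, for every t ∈ [0,T], m(t) ≤ −h₀ + ∫₀ᵗ (a·m(s) + b + (a−b)·p(s)) ds. Then p(T) ≥ (e^{aT}(h₀ − b/a) + b/a − 1) / ((1 − b/a)(e^{aT} − 1)). -/

import Mathlib

/-- analytic core of the finite-horizon bound of Theorem 1. If
`p : [0,T] → [0,1]` is nondecreasing and `m` is continuous with `m T ≥ -1` and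
satisfies the integral inequality
`m t ≤ -h₀ + ∫₀ᵗ (a m s + b + (a - b) p s) ds` on `[0, T]`, then
`p T ≥ (e^{aT}(h₀ - b/a) + b/a - 1) / ((1 - b/a)(e^{aT} - 1))`. -/
theorem exit_prob_lower_bound_core (a b T h₀ : ℝ)
    (hab : b < a) (hb : 0 ≤ b) (hT : 0 < T) (hh₀ : h₀ ∈ Set.Icc (0 : ℝ) 1)
    (p : ℝ → ℝ) (hp01 : ∀ t ∈ Set.Icc (0 : ℝ) T, p t ∈ Set.Icc (0 : ℝ) 1)
    (hpmono : MonotoneOn p (Set.Icc (0 : ℝ) T))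
    (m : ℝ → ℝ) (hm : ContinuousOn m (Set.Icc (0 : ℝ) T)) (hmT : -1 ≤ m T)
    (hint : ∀ t ∈ Set.Icc (0 : ℝ) T,
      m t ≤ -h₀ + ∫ s in (0 : ℝ)..t, (a * m s + b + (a - b) * p s)) :
    p T ≥ (Real.exp (a * T) * (h₀ - b / a) + b / a - 1) /
      ((1 - b / a) * (Real.exp (a * T) - 1)) := by
  have ha : 0 < a := hb.trans_lt hab
  set q := p T with hq
  set c := b + (a - b) * q with hc
  set m' : ℝ → ℝ := fun x => m (Set.projIcc 0 T hT.le x) with hm'def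
  have hm'cont : Continuous m' := by
    have : Continuous (Set.restrict (Set.Icc (0:ℝ) T) m) := hm.restrict
    exact this.Icc_extend' |>.comp continuous_id |>.congr (fun x => rfl)
  have hm'eq : ∀ x ∈ Set.Icc (0:ℝ) T, m' x = m x := by
    intro x hx; simp [hm'def, Set.projIcc_of_mem hT.le hx]
  set g : ℝ → ℝ := fun s => a * m' s + c with hg
  have hgcont : Continuous g := by continuity
  set G : ℝ → ℝ := fun t => ∫ s in (0:ℝ)..t, g s with hG
  have hGderiv : ∀ x : ℝ, HasDerivAt G (g x) x := fun x =>
    intervalIntegral.integral_hasDerivAt_right (hgcont.intervalIntegrable 0 x)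
      (hgcont.stronglyMeasurableAtFilter _ _) hgcont.continuousAt
  set f : ℝ → ℝ := fun t => -h₀ + G t with hf
  have hcomp : ∀ t ∈ Set.Icc (0:ℝ) T, m t ≤ f t := by
    intro t ht
    refine (hint t ht).trans ?_
    have h1 : (∫ s in (0:ℝ)..t, (a * m s + b + (a - b) * p s)) ≤ G t := by
      have h0t : Set.Icc (0:ℝ) t ⊆ Set.Icc (0:ℝ) T := Set.Icc_subset_Icc le_rfl ht.2
      have huIcc : Set.uIcc (0:ℝ) t = Set.Icc 0 t := Set.uIcc_of_le ht.1
      have hpint : IntervalIntegrable p MeasureTheory.volume 0 t := by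
        apply MonotoneOn.intervalIntegrable
        rw [huIcc]; exact hpmono.mono h0t
      have hmint : IntervalIntegrable m MeasureTheory.volume 0 t := by
        apply ContinuousOn.intervalIntegrable
        rw [huIcc]; exact hm.mono h0t
      apply intervalIntegral.integral_mono_on ht.1
      · exact (hmint.const_mul a |>.add (intervalIntegrable_const)).add
          (hpint.const_mul _)
      · exact hgcont.intervalIntegrable 0 t
      · intro s hs
        have hsT : s ∈ Set.Icc (0:ℝ) T := h0t hs
        have : p s ≤ q := hpmono hsT (Set.right_mem_Icc.2 hT.le) (hs.2.trans ht.2)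
        have hmm : m' s = m s := hm'eq s hsT
        simp only [hg, hmm, hc]
        nlinarith [sub_nonneg.2 hab.le]
    simp only [hf]; linarith
  -- Gronwall
  have hfderiv : ∀ x ∈ Set.Ico (0:ℝ) T, HasDerivWithinAt f (g x) (Set.Ici x) x :=
    fun x _ => ((hGderiv x).const_add (-h₀)).hasDerivWithinAt
  have hfcont : ContinuousOn f (Set.Icc 0 T) :=
    (continuous_iff_continuousAt.2 fun x =>
      (continuousAt_const.add (hGderiv x).continuousAt)).continuousOn
  have hbound : ∀ x ∈ Set.Ico (0:ℝ) T, g x ≤ a * f x + c := by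
    intro x hx
    have hxT : x ∈ Set.Icc (0:ℝ) T := Set.mem_Icc_of_Ico hx
    have h1 : m x ≤ f x := hcomp x hxT
    have h2 : m' x = m x := hm'eq x hxT
    simp only [hg, h2]
    nlinarith
  have hgron := le_gronwallBound_of_liminf_deriv_right_le hfcont
    (fun x hx r hr => (hfderiv x hx).liminf_right_slope_le hr)
    (by simp [hf, hG] : f 0 ≤ -h₀) hbound T (Set.right_mem_Icc.2 hT.le)
  rw [sub_zero, gronwallBound_of_K_ne_0 ha.ne'] at hgron
  have hmTf : m T ≤ f T := hcomp T (Set.right_mem_Icc.2 hT.le)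
  -- key scalar inequality
  have key : -1 ≤ -h₀ * Real.exp (a * T) + c / a * (Real.exp (a * T) - 1) := by
    have h := hgron
    simp only at h
    exact le_trans (hmT.trans hmTf) h
  -- algebra
  have hE : 1 < Real.exp (a * T) := by
    rw [show (1:ℝ) = Real.exp 0 by simp]
    exact Real.exp_lt_exp.2 (by positivity)
  set E := Real.exp (a * T)
  have hden : 0 < (1 - b / a) * (E - 1) := by
    apply mul_pos
    · rw [sub_pos, div_lt_one ha]; exact hab
    · linarith
  rw [ge_iff_le, div_le_iff₀ hden]
  have hc' : a * h₀ * E - a ≤ c * (E - 1) := by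
    have := key
    have h2 : -a ≤ a * (-h₀ * E + c / a * (E - 1)) := by nlinarith
    have h3 : a * (c / a * (E - 1)) = c * (E - 1) := by field_simp
    nlinarith [h2, h3]
  have hcq : c = b + (a - b) * q := hc
  -- goal: E*(h₀ - b/a) + b/a - 1 ≤ q * ((1 - b/a)*(E-1))
  have : a * (E * (h₀ - b / a) + b / a - 1) ≤ a * (q * ((1 - b / a) * (E - 1))) := by
    have l1 : a * (E * (h₀ - b / a) + b / a - 1) = a * h₀ * E - b * E + b - a := by
      field_simp
    have l2 : a * (q * ((1 - b / a) * (E - 1))) = q * ((a - b) * (E - 1)) := by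
      field_simp
    rw [l1, l2]
    have hce : c * (E - 1) = b * E - b + q * ((a - b) * (E - 1)) := by rw [hc]; ring
    linarith [hc', hce]
  exact (mul_le_mul_iff_right₀ ha).1 this
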